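/- Let ρ : L^∞_c → ℝ be a monetary risk measure such that its acceptance set 𝒜_ρ is 𝒫-sensitive. Then the set 𝒬_rel := {Q ∈ 𝔓_c(Ω) : ρ^Q_E(0) ∈ ℝ} is nonempty and is a reduction set for 𝒜_ρ. -/

import Mathlib

open MeasureTheory Filter Set

variable {Ω : Type*} [MeasurableSpace Ω]

/-- Quasi-sure equality with respect to a family of measures. -/
def QSEq (𝔓 : Set (Measure Ω)) (x y : Ω → ℝ) : Prop := ∀ P ∈ 𝔓, x =ᵐ[P] y

def qsSetoid (𝔓 : Set (Measure Ω)) : Setoid (Ω → ℝ) where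
  r := QSEq 𝔓
  iseqv := ⟨fun _ _ _ => EventuallyEq.refl _ _,
    fun h P hP => (h P hP).symm,
    fun h1 h2 P hP => (h1 P hP).trans (h2 P hP)⟩

/-- The robust space `L⁰_c`. -/
def L0c (𝔓 : Set (Measure Ω)) := Quotient (qsSetoid 𝔓)

def aeSetoid (Q : Measure Ω) : Setoid (Ω → ℝ) where
  r x y := x =ᵐ[Q] y
  iseqv := ⟨fun _ => EventuallyEq.refl _ _, EventuallyEq.symm, EventuallyEq.trans⟩

/-- The space `L⁰_Q` for a single measure. -/
def L0 (Q : Measure Ω) := Quotient (aeSetoid Q)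

/-- Probability measures dominated by the family `𝔓` (vanishing on `𝔓`-polar sets). -/
def Pc (𝔓 : Set (Measure Ω)) : Set (Measure Ω) :=
  {Q | IsProbabilityMeasure Q ∧ ∀ N : Set Ω, (∀ P ∈ 𝔓, P N = 0) → Q N = 0}

abbrev PcM (𝔓 : Set (Measure Ω)) := {Q : Measure Ω // Q ∈ Pc 𝔓}

theorem QSEq.aeEq {𝔓 : Set (Measure Ω)} (Q : PcM 𝔓) {x y : Ω → ℝ}
    (h : QSEq 𝔓 x y) : x =ᵐ[Q.1] y :=
  ae_iff.2 (Q.2.2 _ fun P hP => ae_iff.1 (h P hP))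

/-- The map `j_Q : L⁰_c → L⁰_Q`. -/
def jQ {𝔓 : Set (Measure Ω)} (Q : PcM 𝔓) : L0c 𝔓 → L0 Q.1 :=
  Quotient.lift (fun x => Quotient.mk (aeSetoid Q.1) x)
    (fun _ _ h => Quotient.sound (h.aeEq Q))

/-- The `𝔓`-quasi-sure order on `L⁰_c`. -/
def qsLe {𝔓 : Set (Measure Ω)} : L0c 𝔓 → L0c 𝔓 → Prop :=
  Quotient.lift₂ (fun x y => ∀ P ∈ 𝔓, x ≤ᵐ[P] y)
    (fun _ _ _ _ ha hb => propext
      ⟨fun h P hP => ((ha P hP).symm.le.trans (h P hP)).trans (hb P hP).le,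
       fun h P hP => ((ha P hP).le.trans (h P hP)).trans (hb P hP).symm.le⟩)

/-- The `Q`-a.s. order on `L⁰_c`, for `Q ∈ 𝔓_c(Ω)`. -/
def qLe {𝔓 : Set (Measure Ω)} (Q : PcM 𝔓) : L0c 𝔓 → L0c 𝔓 → Prop :=
  Quotient.lift₂ (fun x y => x ≤ᵐ[Q.1] y)
    (fun _ _ _ _ ha hb => propext
      ⟨fun h => (((ha.aeEq Q).symm.le.trans h)).trans (hb.aeEq Q).le,
       fun h => (((ha.aeEq Q).le.trans h)).trans (hb.aeEq Q).symm.le⟩)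

def L0c.add {𝔓 : Set (Measure Ω)} : L0c 𝔓 → L0c 𝔓 → L0c 𝔓 :=
  Quotient.map₂ (fun x y ω => x ω + y ω)
    (fun _ _ ha _ _ hb P hP => by filter_upwards [ha P hP, hb P hP] with ω h1 h2; simp [h1, h2])

def L0c.const (𝔓 : Set (Measure Ω)) (m : ℝ) : L0c 𝔓 := Quotient.mk (qsSetoid 𝔓) (fun _ => m)

def L0c.smul {𝔓 : Set (Measure Ω)} (c : ℝ) : L0c 𝔓 → L0c 𝔓 :=
  Quotient.map (fun x ω => c * x ω)
    (fun _ _ ha P hP => by filter_upwards [ha P hP] with ω h1; simp [h1])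

def L0c.abs {𝔓 : Set (Measure Ω)} : L0c 𝔓 → L0c 𝔓 :=
  Quotient.map (fun x ω => |x ω|)
    (fun _ _ ha P hP => by filter_upwards [ha P hP] with ω h1; simp [h1])

/-- Multiplication by the indicator of a set `A`. -/
noncomputable def L0c.mulInd {𝔓 : Set (Measure Ω)} (A : Set Ω) : L0c 𝔓 → L0c 𝔓 :=
  Quotient.map (fun x => A.indicator x)
    (fun _ _ ha P hP => by
      filter_upwards [ha P hP] with ω h1
      by_cases h : ω ∈ A <;> simp [Set.indicator, h, h1])

/-- The class of the indicator function of `A`. -/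
noncomputable def L0c.ind (𝔓 : Set (Measure Ω)) (A : Set Ω) : L0c 𝔓 :=
  Quotient.mk (qsSetoid 𝔓) (A.indicator fun _ => (1 : ℝ))

/-- The bounded elements: `L^∞_c`. -/
def Linftyc (𝔓 : Set (Measure Ω)) : Set (L0c 𝔓) :=
  {X | ∃ m : ℝ, 0 < m ∧ qsLe X.abs (L0c.const 𝔓 m)}

/-- Expectation under `R ∈ 𝔓_c(Ω)`. -/
noncomputable def expct {𝔓 : Set (Measure Ω)} (R : PcM 𝔓) : L0c 𝔓 → ℝ :=
  Quotient.lift (fun x => integral R.1 (fun ω => x ω))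
    (fun _ _ h => integral_congr_ae (h.aeEq R))

/-- `𝒬` is a reduction set for `𝒞 ⊆ 𝒳`. -/
def IsReductionSet (𝔓 : Set (Measure Ω)) (𝒳 𝒞 : Set (L0c 𝔓)) (𝒬 : Set (PcM 𝔓)) : Prop :=
  𝒬.Nonempty ∧ ∀ X ∈ 𝒳, (X ∈ 𝒞 ↔ ∀ Q ∈ 𝒬, jQ Q X ∈ jQ Q '' 𝒞)

/-- `𝒞 ⊆ 𝒳` is `𝔓`-sensitive. -/
def PSensitive (𝔓 : Set (Measure Ω)) (𝒳 𝒞 : Set (L0c 𝔓)) : Prop :=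
  𝒞 = ∅ ∨ ∀ X ∈ 𝒳, (X ∈ 𝒞 ↔ ∀ Q : PcM 𝔓, jQ Q X ∈ jQ Q '' 𝒞)

/-- `ρ^Q_E(X) = inf { ρ(Y) : Y ∈ L^∞_c, j_Q(Y) = j_Q(X) }`, valued in `[-∞,∞]`. -/
noncomputable def rhoQE {Ω : Type*} [MeasurableSpace Ω] {𝔓 : Set (Measure Ω)}
    (ρ : L0c 𝔓 → ℝ) (Q : PcM 𝔓) (X : L0c 𝔓) : EReal :=
  ⨅ Y ∈ {Y | Y ∈ Linftyc 𝔓 ∧ jQ Q Y = jQ Q X}, (ρ Y : EReal)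


section Aux

variable {Ω : Type*} [MeasurableSpace Ω] {𝔓 : Set (Measure Ω)}

lemma const_mem_Linftyc (c : ℝ) : L0c.const 𝔓 c ∈ Linftyc 𝔓 := by
  refine ⟨|c| + 1, by positivity, ?_⟩
  intro P hP
  refine Filter.Eventually.of_forall fun ω => ?_
  show |c| ≤ |c| + 1
  linarith

lemma add_mem_Linftyc {X Y : L0c 𝔓} (hX : X ∈ Linftyc 𝔓) (hY : Y ∈ Linftyc 𝔓) :
    X.add Y ∈ Linftyc 𝔓 := by
  obtain ⟨m, hm, hXm⟩ := hX
  obtain ⟨n, hn, hYn⟩ := hY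
  refine ⟨m + n, by linarith, ?_⟩
  induction X using Quotient.inductionOn with | h x => ?_
  induction Y using Quotient.inductionOn with | h y => ?_
  intro P hP
  have h1 : (fun ω => |x ω|) ≤ᵐ[P] (fun _ => m) := hXm P hP
  have h2 : (fun ω => |y ω|) ≤ᵐ[P] (fun _ => n) := hYn P hP
  filter_upwards [h1, h2] with ω hx hy
  calc |x ω + y ω| ≤ |x ω| + |y ω| := abs_add_le _ _
    _ ≤ m + n := add_le_add hx hy

lemma jQ_mk_eq {Q : PcM 𝔓} {x y : Ω → ℝ} (h : x =ᵐ[Q.1] y) :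
    jQ Q (Quotient.mk (qsSetoid 𝔓) x) = jQ Q (Quotient.mk (qsSetoid 𝔓) y) :=
  Quotient.sound h

lemma jQ_mk_eq' {Q : PcM 𝔓} {x y : Ω → ℝ}
    (h : jQ Q (Quotient.mk (qsSetoid 𝔓) x) = jQ Q (Quotient.mk (qsSetoid 𝔓) y)) :
    x =ᵐ[Q.1] y :=
  Quotient.exact h

lemma const_add_const (c : ℝ) :
    (L0c.const 𝔓 0).add (L0c.const 𝔓 c) = L0c.const 𝔓 c := by
  refine Quotient.sound ?_
  intro P hP
  refine Filter.Eventually.of_forall fun ω => ?_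
  show (0 : ℝ) + c = c
  ring

lemma rho_const (ρ : L0c 𝔓 → ℝ)
    (hcash : ∀ X ∈ Linftyc 𝔓, ∀ m : ℝ, ρ (X.add (L0c.const 𝔓 m)) = ρ X + m)
    (c : ℝ) : ρ (L0c.const 𝔓 c) = ρ (L0c.const 𝔓 0) + c := by
  rw [← const_add_const c]
  exact hcash _ (const_mem_Linftyc 0) c

lemma rhoQE_zero_ne_top (ρ : L0c 𝔓 → ℝ) (Q : PcM 𝔓) :
    rhoQE ρ Q (L0c.const 𝔓 0) ≠ ⊤ := by
  have h : rhoQE ρ Q (L0c.const 𝔓 0) ≤ (ρ (L0c.const 𝔓 0) : EReal) :=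
    iInf₂_le (L0c.const 𝔓 0) ⟨const_mem_Linftyc 0, rfl⟩
  exact ne_top_of_le_ne_top (EReal.coe_ne_top _) h

/-- Key lemma: if `ρ^Q_E(0) = ⊥` then every `j_Q X` lies in the image of the acceptance set. -/
lemma mem_image_of_bot (ρ : L0c 𝔓 → ℝ)
    (hmono : ∀ X ∈ Linftyc 𝔓, ∀ Y ∈ Linftyc 𝔓, qsLe X Y → ρ X ≤ ρ Y)
    (hcash : ∀ X ∈ Linftyc 𝔓, ∀ m : ℝ, ρ (X.add (L0c.const 𝔓 m)) = ρ X + m)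
    {Q : PcM 𝔓} (hQ : rhoQE ρ Q (L0c.const 𝔓 0) = ⊥)
    {X : L0c 𝔓} (hX : X ∈ Linftyc 𝔓) :
    jQ Q X ∈ jQ Q '' {X | X ∈ Linftyc 𝔓 ∧ ρ X ≤ 0} := by
  obtain ⟨m, hm, hXm⟩ := hX
  have hYex : ∃ Y, (Y ∈ Linftyc 𝔓 ∧ jQ Q Y = jQ Q (L0c.const 𝔓 0)) ∧
      (ρ Y : EReal) < ((-m : ℝ) : EReal) := by
    by_contra h
    push_neg at h
    have hle : ((-m : ℝ) : EReal) ≤ rhoQE ρ Q (L0c.const 𝔓 0) :=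
      le_iInf₂ fun Y hY => h Y hY
    rw [hQ] at hle
    exact absurd hle (by simp)
  obtain ⟨Y, ⟨hYL, hYj⟩, hρY⟩ := hYex
  have hρYlt : ρ Y < -m := by exact_mod_cast hρY
  refine ⟨Y.add X, ⟨⟨add_mem_Linftyc hYL ⟨m, hm, hXm⟩, ?_⟩, ?_⟩⟩
  · -- ρ (Y + X) ≤ ρ (Y + m) = ρ Y + m < 0
    have hle : qsLe (Y.add X) (Y.add (L0c.const 𝔓 m)) := by
      induction Y using Quotient.inductionOn with | h y => ?_
      induction X using Quotient.inductionOn with | h x => ?_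
      intro P hP
      have h1 : (fun ω => |x ω|) ≤ᵐ[P] (fun _ => m) := hXm P hP
      filter_upwards [h1] with ω hx
      show y ω + x ω ≤ y ω + m
      have : x ω ≤ m := le_trans (le_abs_self _) hx
      linarith
    have h2 := hmono _ (add_mem_Linftyc hYL ⟨m, hm, hXm⟩) _
      (add_mem_Linftyc hYL (const_mem_Linftyc m)) hle
    rw [hcash Y hYL m] at h2
    linarith
  · -- jQ (Y + X) = jQ X
    induction Y using Quotient.inductionOn with | h y => ?_
    induction X using Quotient.inductionOn with | h x => ?_
    have hy0 : y =ᵐ[Q.1] (fun _ => (0 : ℝ)) := jQ_mk_eq' hYj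
    refine jQ_mk_eq ?_
    filter_upwards [hy0] with ω h0
    show y ω + x ω = x ω
    rw [h0]; ring

end Aux

theorem relevant_measures_reduction_set {Ω : Type*} [MeasurableSpace Ω]
    (𝔓 : Set (Measure Ω)) (h𝔓 : 𝔓.Nonempty) (hprob : ∀ P ∈ 𝔓, IsProbabilityMeasure P)
    (ρ : L0c 𝔓 → ℝ)
    (hmono : ∀ X ∈ Linftyc 𝔓, ∀ Y ∈ Linftyc 𝔓, qsLe X Y → ρ X ≤ ρ Y)
    (hcash : ∀ X ∈ Linftyc 𝔓, ∀ m : ℝ, ρ (X.add (L0c.const 𝔓 m)) = ρ X + m)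
    (hsens : PSensitive 𝔓 (Linftyc 𝔓) {X | X ∈ Linftyc 𝔓 ∧ ρ X ≤ 0}) :
    {Q : PcM 𝔓 | rhoQE ρ Q (L0c.const 𝔓 0) ≠ ⊤ ∧ rhoQE ρ Q (L0c.const 𝔓 0) ≠ ⊥}.Nonempty ∧
    IsReductionSet 𝔓 (Linftyc 𝔓) {X | X ∈ Linftyc 𝔓 ∧ ρ X ≤ 0}
      {Q : PcM 𝔓 | rhoQE ρ Q (L0c.const 𝔓 0) ≠ ⊤ ∧ rhoQE ρ Q (L0c.const 𝔓 0) ≠ ⊥} := by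
  set 𝒜 : Set (L0c 𝔓) := {X | X ∈ Linftyc 𝔓 ∧ ρ X ≤ 0} with h𝒜
  set 𝒬 : Set (PcM 𝔓) :=
    {Q : PcM 𝔓 | rhoQE ρ Q (L0c.const 𝔓 0) ≠ ⊤ ∧ rhoQE ρ Q (L0c.const 𝔓 0) ≠ ⊥} with h𝒬
  -- the acceptance set is nonempty
  have hAne : L0c.const 𝔓 (-ρ (L0c.const 𝔓 0)) ∈ 𝒜 := by
    refine ⟨const_mem_Linftyc _, ?_⟩
    rw [rho_const ρ hcash]
    linarith
  -- hence sensitivity gives the iff characterization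
  have hsens' : ∀ X ∈ Linftyc 𝔓, (X ∈ 𝒜 ↔ ∀ Q : PcM 𝔓, jQ Q X ∈ jQ Q '' 𝒜) := by
    rcases hsens with h | h
    · exact absurd (h ▸ hAne) (Set.notMem_empty _)
    · exact h
  -- 𝒬 is nonempty
  have hQne : 𝒬.Nonempty := by
    by_contra hempty
    rw [Set.not_nonempty_iff_eq_empty] at hempty
    have hbot : ∀ Q : PcM 𝔓, rhoQE ρ Q (L0c.const 𝔓 0) = ⊥ := by
      intro Q
      by_contra hQ
      have : Q ∈ 𝒬 := ⟨rhoQE_zero_ne_top ρ Q, hQ⟩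
      rw [hempty] at this
      exact this
    set X : L0c 𝔓 := L0c.const 𝔓 (1 - ρ (L0c.const 𝔓 0)) with hXdef
    have hXL : X ∈ Linftyc 𝔓 := const_mem_Linftyc _
    have hXA : X ∈ 𝒜 := by
      rw [hsens' X hXL]
      intro Q
      exact mem_image_of_bot ρ hmono hcash (hbot Q) hXL
    have : ρ X ≤ 0 := hXA.2
    rw [hXdef, rho_const ρ hcash] at this
    linarith
  refine ⟨hQne, hQne, ?_⟩
  intro X hX
  constructor
  · intro hXA Q _
    exact ⟨X, hXA, rfl⟩
  · intro h
    rw [hsens' X hX]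
    intro Q
    by_cases hQ : rhoQE ρ Q (L0c.const 𝔓 0) = ⊥
    · exact mem_image_of_bot ρ hmono hcash hQ hX
    · exact h Q ⟨rhoQE_zero_ne_top ρ Q, hQ⟩
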